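/- Let G be a finite simple connected graph, let u and v be vertices with v ∈ F(u), and let x ∈ N[u] satisfy d(x,v) = e(u). Then every vertex w lying on a shortest v–x path (i.e., with d(v,w) + d(w,x) = d(v,x)) such that d(v,w) ≥ 3 satisfies w ∉ N[F(u)]; that is, w ∉ F(u) and w has no neighbour in F(u). -/

import Mathlib

variable {V : Type*}

/-- The closed neighbourhood `N[v]` of a vertex. -/
def closedNbhd (G : SimpleGraph V) (v : V) : Set V := insert v (G.neighborSet v)

/-- `N[S] = ⋃_{v ∈ S} N[v]`. -/
def closedNbhdSet (G : SimpleGraph V) (S : Set V) : Set V := ⋃ v ∈ S, closedNbhd G v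

/-- A vertex `v` is an extremity if the subgraph induced on `V \ N[v]` is
connected (possibly empty). -/
def IsExtremity (G : SimpleGraph V) (v : V) : Prop :=
  (G.induce (closedNbhd G v)ᶜ).Preconnected

/-- `M` is a module: every vertex outside `M` is adjacent to all of `M` or none of `M`. -/
def IsModuleSet (G : SimpleGraph V) (M : Set V) : Prop :=
  ∀ z ∉ M, ∀ x ∈ M, ∀ y ∈ M, (G.Adj z x ↔ G.Adj z y)

/-- A graph is prime if its only modules are `∅`, `V` and the singletons. -/
def IsPrimeGraph (G : SimpleGraph V) : Prop :=
  ∀ M : Set V, IsModuleSet G M → M = ∅ ∨ M = Set.univ ∨ ∃ v, M = {v}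

/-- Eccentricity of a vertex in a finite graph. -/
noncomputable def ecc [Fintype V] (G : SimpleGraph V) (u : V) : ℕ :=
  Finset.univ.sup (G.dist u)

/-- Diameter of a finite graph. -/
noncomputable def gdiam [Fintype V] (G : SimpleGraph V) : ℕ :=
  Finset.univ.sup fun u => ecc G u

/-- `u ⊥_w v`: vertices `u` and `v` lie in different connected components of the
subgraph induced on `V \ N[w]`. -/
def Perp (G : SimpleGraph V) (w u v : V) : Prop :=
  u ∉ closedNbhd G w ∧ v ∉ closedNbhd G w ∧
    ¬ ∃ p : G.Walk u v, ∀ z ∈ p.support, z ∉ closedNbhd G w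

/-- `S` is `u`-transitive: for every `x ∈ S` and vertex `y` distinct from and
nonadjacent to `x`, `x ⊥_y u` implies `y ∈ S`. -/
def UTransitive (G : SimpleGraph V) (u : V) (S : Set V) : Prop :=
  ∀ x ∈ S, ∀ y : V, y ≠ x → ¬ G.Adj x y → Perp G y x u → y ∈ S

/-- `S` is a dominating set: every vertex lies in `N[S]`. -/
def IsDominatingSet (G : SimpleGraph V) (S : Set V) : Prop :=
  ∀ v : V, ∃ s ∈ S, v ∈ closedNbhd G s

/-- `D` is a dominating target: every superset of `D` inducing a connected
subgraph is a dominating set. -/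
def IsDomTarget (G : SimpleGraph V) (D : Set V) : Prop :=
  ∀ S : Set V, D ⊆ S → (G.induce S).Connected → IsDominatingSet G S

/-- An asteroidal set: an independent set `A` such that for every `a ∈ A`, all
vertices of `A \ {a}` lie in a single connected component of the subgraph
induced on `V \ N[a]`. -/
def IsAsteroidalSet (G : SimpleGraph V) (A : Set V) : Prop :=
  (A.Pairwise fun x y => ¬ G.Adj x y) ∧
  ∀ a ∈ A, ∀ b ∈ A, ∀ c ∈ A, b ≠ a → c ≠ a →
    ∃ p : G.Walk b c, ∀ z ∈ p.support, z ∉ closedNbhd G a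

theorem stmt_18 [Fintype V] (G : SimpleGraph V) (hG : G.Connected)
    (u v : V) (hv : G.dist u v = ecc G u)
    (x : V) (hx : x ∈ closedNbhd G u) (hxv : G.dist x v = ecc G u)
    (w : V) (hw : G.dist v w + G.dist w x = G.dist v x) (h3 : 3 ≤ G.dist v w) :
    G.dist u w ≠ ecc G u ∧ ∀ z : V, G.dist u z = ecc G u → ¬ G.Adj w z := by
  
  have hux : G.dist u x ≤ 1 := by
    rcases Set.mem_insert_iff.mp hx with h | h
    · simp [h, SimpleGraph.dist_self]
    · have := SimpleGraph.dist_le (SimpleGraph.Adj.toWalk h)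
      exact this
  have hsum : G.dist v w + G.dist w x = ecc G u := by
    rw [hw, SimpleGraph.dist_comm, hxv]
  have huw : G.dist u w ≤ G.dist u x + G.dist x w := hG.dist_triangle
  have hxw : G.dist x w = G.dist w x := SimpleGraph.dist_comm ..
  have huwlt : G.dist u w + 2 ≤ ecc G u := by omega
  constructor
  · omega
  · intro z hz hadj
    have h1 : G.dist u z ≤ G.dist u w + G.dist w z := hG.dist_triangle
    have h2 : G.dist w z ≤ 1 := by
      have := SimpleGraph.dist_le (SimpleGraph.Adj.toWalk hadj)
      simpa using this
    omega
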